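/- Let M be a module over a commutative ring R of characteristic p, with a q-semilinear map F : M → M (q = p^e) such that the operation N ↦ F(N) on R-submodules (the submodule generated by the image) commutes with finite intersections. Suppose M_1, M_2 are R-submodules with M_i ⊆ F(M_i), M = ⋃_r F^r(M_i) for i = 1, 2, and M_2 finitely generated as an R-module. Then M_1 ∩ M_2 also satisfies M_1 ∩ M_2 ⊆ F(M_1 ∩ M_2) and M = ⋃_r F^r(M_1 ∩ M_2). (That is, the intersection of two roots of a unit R[F]-module is again a root.) -/
import Mathlib


/-- For a semilinear map `F` on an `R`-module `M` and an `R`-submodule `N`, the submodule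
`F(N)` generated by the image of `N` under `F`. -/
def fSub (R : Type*) {M : Type*} [CommRing R] [AddCommGroup M] [Module R M]
    (F : M →+ M) (N : Submodule R M) : Submodule R M :=
  Submodule.span R (⇑F '' (N : Set M))

theorem fSub_mono (R : Type*) {M : Type*} [CommRing R] [AddCommGroup M] [Module R M]
    (F : M →+ M) {N N' : Submodule R M} (h : N ≤ N') : fSub R F N ≤ fSub R F N' :=
  Submodule.span_mono (Set.image_mono h)

/-- Let `M` be a module over a commutative ring `R` of characteristic `p`, with a
`q`-semilinear map `F : M → M` (`q = p ^ e`) such that `N ↦ F(N)` commutes with finite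
intersections of submodules.  If `M₁, M₂` are roots of `M` (i.e. `Mᵢ ⊆ F(Mᵢ)` and
`M = ⋃_r F^r(Mᵢ)`), with `M₂` finitely generated, then `M₁ ⊓ M₂` is again a root of `M`. -/
theorem stmt11 (R : Type*) [CommRing R] (p : ℕ) [Fact p.Prime] [CharP R p] (e : ℕ) (he : 1 ≤ e)
    (M : Type*) [AddCommGroup M] [Module R M]
    (F : M →+ M) (hF : ∀ (r : R) (m : M), F (r • m) = r ^ (p ^ e) • F m)
    (hcomm : ∀ N N' : Submodule R M, fSub R F (N ⊓ N') = fSub R F N ⊓ fSub R F N')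
    (M₁ M₂ : Submodule R M)
    (h₁ : M₁ ≤ fSub R F M₁) (h₁' : (⨆ r : ℕ, (fSub R F)^[r] M₁) = ⊤)
    (h₂ : M₂ ≤ fSub R F M₂) (h₂' : (⨆ r : ℕ, (fSub R F)^[r] M₂) = ⊤)
    (h₂fg : M₂.FG) :
    M₁ ⊓ M₂ ≤ fSub R F (M₁ ⊓ M₂) ∧ (⨆ r : ℕ, (fSub R F)^[r] (M₁ ⊓ M₂)) = ⊤ := by
  -- iterated fSub commutes with inf
  have hiter : ∀ r : ℕ, (fSub R F)^[r] (M₁ ⊓ M₂) = (fSub R F)^[r] M₁ ⊓ (fSub R F)^[r] M₂ := by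
    intro r
    induction r with
    | zero => simp
    | succ n ih =>
      simp only [Function.iterate_succ', Function.comp_apply, ih, hcomm]
  -- monotone chains
  have hmono : ∀ (N : Submodule R M), N ≤ fSub R F N →
      Monotone fun r : ℕ => (fSub R F)^[r] N := by
    intro N hN
    apply monotone_nat_of_le_succ
    intro n
    rw [Function.iterate_succ', Function.comp_apply]
    induction n with
    | zero => simpa using hN
    | succ k ih =>
      rw [Function.iterate_succ', Function.comp_apply]
      exact fSub_mono R F ih
  constructor
  · rw [hcomm]
    exact inf_le_inf h₁ h₂
  · rw [eq_top_iff]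
    intro x _
    have hx₁ : x ∈ ⨆ r : ℕ, (fSub R F)^[r] M₁ := h₁' ▸ Submodule.mem_top
    have hx₂ : x ∈ ⨆ r : ℕ, (fSub R F)^[r] M₂ := h₂' ▸ Submodule.mem_top
    have hd₁ : Directed (· ≤ ·) fun r : ℕ => (fSub R F)^[r] M₁ :=
      (hmono M₁ h₁).directed_le
    have hd₂ : Directed (· ≤ ·) fun r : ℕ => (fSub R F)^[r] M₂ :=
      (hmono M₂ h₂).directed_le
    obtain ⟨r, hr⟩ := (Submodule.mem_iSup_of_directed _ hd₁).mp hx₁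
    obtain ⟨s, hs⟩ := (Submodule.mem_iSup_of_directed _ hd₂).mp hx₂
    refine Submodule.mem_iSup_of_mem (max r s) ?_
    rw [hiter]
    exact ⟨hmono M₁ h₁ (le_max_left r s) hr, hmono M₂ h₂ (le_max_right r s) hs⟩
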